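/- arXiv:1702.05037 — 4 statements merged into one kernel-verified Lean document; each statement's English description precedes it below -/
import Mathlib

section
/- Let d, M be positive integers and I = {1,…,M}. There exists a subset S ⊆ I^d with |S| ≥ (M/4)^{d/2} such that any two distinct elements u, v ∈ S have Hamming distance H(u,v) ≥ d/2 (indeed > ⌈d/2⌉). -/
open Finset

lemma vg_fiber_card_le {d M : ℕ} (hM : 0 < M) (s : Fin d → Fin M) (T : Finset (Fin d)) :
    ({x : Fin d → Fin M | ∀ j ∉ T, x j = s j} : Finset _).card ≤ M ^ T.card := by
  classical
  have hinj : Set.InjOn (fun (x : Fin d → Fin M) => fun j : T => x j)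
      ({x : Fin d → Fin M | ∀ j ∉ T, x j = s j} : Finset _) := by
    intro x hx y hy h
    simp only [coe_filter, Set.mem_setOf_eq, mem_coe, Finset.mem_filter] at hx hy
    funext j
    by_cases hj : j ∈ T
    · exact congrFun h ⟨j, hj⟩
    · rw [hx.2 j hj, hy.2 j hj]
  calc ({x : Fin d → Fin M | ∀ j ∉ T, x j = s j} : Finset _).card
      ≤ (Finset.univ : Finset (T → Fin M)).card :=
        Finset.card_le_card_of_injOn _ (fun x _ => mem_univ _) hinj
    _ = M ^ T.card := by
        rw [card_univ, Fintype.card_fun, Fintype.card_fin, Fintype.card_coe]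

lemma vg_ball_card_le {d M : ℕ} (hM : 0 < M) (r : ℕ) (s : Fin d → Fin M) :
    ({x : Fin d → Fin M | hammingDist x s ≤ r} : Finset _).card ≤ 2 ^ d * M ^ r := by
  classical
  have hsub : ({x : Fin d → Fin M | hammingDist x s ≤ r} : Finset _) ⊆
      ({T : Finset (Fin d) | T.card ≤ r} : Finset _).biUnion
        (fun T => ({x : Fin d → Fin M | ∀ j ∉ T, x j = s j} : Finset _)) := by
    intro x hx
    simp only [Finset.mem_filter, mem_univ, true_and] at hx
    refine mem_biUnion.mpr ⟨({j | x j ≠ s j} : Finset _), ?_, ?_⟩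
    · simp only [Finset.mem_filter, mem_univ, true_and]; unfold hammingDist at hx; convert hx
    · simp only [Finset.mem_filter, mem_univ, true_and]
      intro j hj
      simpa using hj
  calc ({x : Fin d → Fin M | hammingDist x s ≤ r} : Finset _).card
      ≤ _ := Finset.card_le_card hsub
    _ ≤ ∑ T ∈ ({T : Finset (Fin d) | T.card ≤ r} : Finset _),
          ({x : Fin d → Fin M | ∀ j ∉ T, x j = s j} : Finset _).card :=
        Finset.card_biUnion_le
    _ ≤ ∑ T ∈ ({T : Finset (Fin d) | T.card ≤ r} : Finset _), M ^ r := by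
        refine Finset.sum_le_sum fun T hT => ?_
        simp only [Finset.mem_filter, mem_univ, true_and] at hT
        exact le_trans (vg_fiber_card_le hM s T) (Nat.pow_le_pow_right hM hT)
    _ ≤ 2 ^ d * M ^ r := by
        rw [Finset.sum_const, smul_eq_mul]
        have : ({T : Finset (Fin d) | T.card ≤ r} : Finset _).card ≤ 2 ^ d := by
          calc _ ≤ (univ : Finset (Finset (Fin d))).card := Finset.card_le_card (by simp)
            _ = 2 ^ d := by simp [Fintype.card_finset]
        exact Nat.mul_le_mul_right _ this

/-- Varshamov–Gilbert-type packing lemma: for positive integers `d, M` there is a subset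
`S ⊆ {1,…,M}^d` with `|S| ≥ (M/4)^{d/2}` whose distinct elements are at Hamming distance
at least `d/2` from each other. -/
theorem varshamov_gilbert_packing (d M : ℕ) (hd : 0 < d) (hM : 0 < M) :
    ∃ S : Finset (Fin d → Fin M),
      ((M : ℝ) / 4) ^ ((d : ℝ) / 2) ≤ (S.card : ℝ) ∧
      ∀ u ∈ S, ∀ v ∈ S, u ≠ v → (d : ℝ) / 2 ≤ (hammingDist u v : ℝ) := by
  classical
  set a : ℕ := (d + 1) / 2 with ha
  set r : ℕ := (d - 1) / 2 with hr
  have har : a = r + 1 := by omega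
  have h2a : d ≤ 2 * a := by omega
  have h2r : 2 * r ≤ d := by omega
  set P : Finset (Fin d → Fin M) → Prop :=
    fun S => ∀ u ∈ S, ∀ v ∈ S, u ≠ v → a ≤ hammingDist u v with hP
  obtain ⟨S, hSmem, hmax⟩ := Finset.exists_max_image
      ((Finset.univ : Finset (Finset (Fin d → Fin M))).filter P) Finset.card
      ⟨∅, by simp [hP]⟩
  simp only [Finset.mem_filter, mem_univ, true_and] at hSmem
  refine ⟨S, ?_, fun u hu v hv huv => ?_⟩
  swap
  · -- distance bound
    have := hSmem u hu v hv huv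
    have hda : (d : ℝ) ≤ 2 * (a : ℝ) := by exact_mod_cast h2a
    have : (a : ℝ) ≤ (hammingDist u v : ℝ) := by exact_mod_cast this
    linarith
  -- cardinality bound
  have hcover : ∀ x : Fin d → Fin M, ∃ s ∈ S, hammingDist x s ≤ r := by
    intro x
    by_contra h
    push_neg at h
    have hxS : x ∉ S := fun hx => by simpa using (h x hx)
    have hins : P (insert x S) := by
      intro u hu v hv huv
      rcases Finset.mem_insert.mp hu with rfl | hu'
      · rcases Finset.mem_insert.mp hv with rfl | hv'
        · exact absurd rfl huv
        · have := h v hv'; omega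
      · rcases Finset.mem_insert.mp hv with rfl | hv'
        · have := h u hu'; rw [hammingDist_comm]; omega
        · exact hSmem u hu' v hv' huv
    have hmem : insert x S ∈ (Finset.univ : Finset (Finset (Fin d → Fin M))).filter P := by
      simp only [Finset.mem_filter, mem_univ, true_and]; exact hins
    have := hmax _ hmem
    rw [Finset.card_insert_of_notMem hxS] at this
    omega
  have hunion : (Finset.univ : Finset (Fin d → Fin M)) ⊆
      S.biUnion (fun s => ({x : Fin d → Fin M | hammingDist x s ≤ r} : Finset _)) := by
    intro x _
    obtain ⟨s, hs, hds⟩ := hcover x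
    exact mem_biUnion.mpr ⟨s, hs, by simpa using hds⟩
  have hnat : M ^ d ≤ S.card * (2 ^ d * M ^ r) := by
    calc M ^ d = (Finset.univ : Finset (Fin d → Fin M)).card := by
          simp [Fintype.card_fun]
      _ ≤ _ := Finset.card_le_card hunion
      _ ≤ ∑ s ∈ S, ({x : Fin d → Fin M | hammingDist x s ≤ r} : Finset _).card :=
          Finset.card_biUnion_le
      _ ≤ ∑ s ∈ S, 2 ^ d * M ^ r := Finset.sum_le_sum fun s _ => vg_ball_card_le hM r s
      _ = S.card * (2 ^ d * M ^ r) := by rw [Finset.sum_const, smul_eq_mul]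
  -- now the real computation
  have hx1 : (1 : ℝ) ≤ (M : ℝ) := by exact_mod_cast hM
  have hx0 : (0 : ℝ) ≤ (M : ℝ) := by positivity
  have hpos : (0 : ℝ) < (2 : ℝ) ^ d * (M : ℝ) ^ r := by positivity
  rw [← mul_le_mul_iff_of_pos_right hpos]
  have hR : (M : ℝ) ^ d ≤ (S.card : ℝ) * ((2 : ℝ) ^ d * (M : ℝ) ^ r) := by
    exact_mod_cast hnat
  refine le_trans ?_ hR
  have h4 : ((4 : ℝ)) ^ ((d : ℝ) / 2) = (2 : ℝ) ^ (d : ℕ) := by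
    have h22 : ((2:ℝ) ^ ((2:ℕ):ℝ)) = 4 := by rw [Real.rpow_natCast]; norm_num
    rw [← h22, ← Real.rpow_natCast (2 : ℝ) d, ← Real.rpow_mul (by norm_num)]
    norm_num
    rw [show (2:ℝ) * ((d:ℝ)/2) = ((d:ℕ):ℝ) by push_cast; ring, Real.rpow_natCast]
  rw [Real.div_rpow hx0 (by norm_num), h4]
  rw [div_mul_eq_mul_div, mul_comm ((2:ℝ)^d) ((M:ℝ)^r), ← mul_assoc, mul_div_assoc,
    div_self (by positivity : ((2:ℝ)^d) ≠ 0), mul_one]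
  calc (M : ℝ) ^ ((d : ℝ) / 2) * (M : ℝ) ^ r
      = (M : ℝ) ^ ((d : ℝ) / 2 + r) := by
        rw [← Real.rpow_natCast (M : ℝ) r, ← Real.rpow_add' hx0]
        positivity
    _ ≤ (M : ℝ) ^ ((d : ℝ)) := by
        apply Real.rpow_le_rpow_of_exponent_le hx1
        have : (2 * r : ℝ) ≤ (d : ℝ) := by exact_mod_cast h2r
        linarith
    _ = (M : ℝ) ^ d := by rw [Real.rpow_natCast]
end

section
/- Let Λ be a probability measure on [0,1] with density λ bounded below by b₁ > 0 and above by b₂. Let κ ≥ 0 be an integer and let φ_κ be the degree-κ orthonormal polynomial (with positive leading coefficient a_κ) obtained by Gram–Schmidt on 1, t, …, t^κ in L²(Λ). Define Φ_{κ,0}(t) = φ_κ(t)λ(t) and Φ_{κ,ℓ+1}(t) = ∫₀^t Φ_{κ,ℓ}(u) du. Then Φ_{κ,ℓ}(1) = 0 for ℓ = 1,…,κ, and Φ_{κ,κ+1}(1) = (−1)^κ/(a_κ·κ!). -/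
open MeasureTheory


lemma repr_lemma (f : ℝ → ℝ) (hf : Measurable f) (C : ℝ) (hC : 0 ≤ C)
    (hbd : ∀ u ∈ Set.Icc (0:ℝ) 1, |f u| ≤ C)
    (Φ : ℕ → ℝ → ℝ) (hΦ0 : ∀ t, Φ 0 t = f t)
    (hΦs : ∀ ℓ t, Φ (ℓ + 1) t = ∫ u in (0:ℝ)..t, Φ ℓ u) :
    ∀ ℓ, ∀ t ∈ Set.Icc (0:ℝ) 1,
      Φ (ℓ + 1) t = ∫ u in (0:ℝ)..t, f u * (t - u)^ℓ / (ℓ.factorial : ℝ) := by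
  intro ℓ
  induction ℓ with
  | zero =>
    intro t ht
    rw [hΦs]
    apply intervalIntegral.integral_congr
    intro u hu
    simp [hΦ0]
  | succ ℓ ih =>
    intro t ht
    obtain ⟨ht0, ht1⟩ := ht
    rw [hΦs]
    set T := Set.Ioc (0:ℝ) t with hT
    have hfac1 : (1:ℝ) ≤ (ℓ.factorial : ℝ) := by
      exact_mod_cast Nat.one_le_iff_ne_zero.mpr (Nat.factorial_ne_zero ℓ)
    have hfacpos : (0:ℝ) < (ℓ.factorial : ℝ) := by positivity
    -- the indicator function on the product
    set S : Set (ℝ × ℝ) := {z : ℝ × ℝ | 0 < z.2 ∧ z.2 ≤ z.1} with hS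
    have hSmeas : MeasurableSet S :=
      (measurableSet_lt measurable_const measurable_snd).inter
        (measurableSet_le measurable_snd measurable_fst)
    set F : ℝ × ℝ → ℝ :=
      S.indicator (fun z => f z.2 * (z.1 - z.2)^ℓ / (ℓ.factorial : ℝ)) with hF
    have hFmeas : Measurable F := by
      apply Measurable.indicator _ hSmeas
      exact ((hf.comp measurable_snd).mul
        ((measurable_fst.sub measurable_snd).pow_const ℓ)).div_const _
    have hFbd : ∀ z ∈ T ×ˢ T, |F z| ≤ C := by
      rintro ⟨s, u⟩ ⟨hs, hu⟩
      by_cases hzS : (s, u) ∈ S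
      · rw [hF, Set.indicator_of_mem hzS]
        obtain ⟨hu0, hus⟩ := hzS
        have hs1 : s ≤ 1 := hs.2.trans ht1
        have h1 : |f u| ≤ C := hbd u ⟨hu.1.le, hu.2.trans ht1⟩
        have h2 : |s - u| ≤ 1 := by
          rw [abs_le]; constructor <;> nlinarith [hu.1, hu.2, hs.1, hs.2]
        calc |f u * (s - u) ^ ℓ / (ℓ.factorial : ℝ)|
            = |f u| * |s - u| ^ ℓ / (ℓ.factorial : ℝ) := by
              rw [abs_div, abs_mul, abs_pow, abs_of_pos hfacpos]
          _ ≤ C * 1 / 1 := by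
              apply div_le_div₀ (by positivity) _ one_pos hfac1
              exact mul_le_mul h1 (pow_le_one₀ (abs_nonneg _) h2) (by positivity) hC
          _ = C := by ring
      · rw [hF, Set.indicator_of_notMem hzS]; simpa using hC
    have hFint : Integrable F ((volume.restrict T).prod (volume.restrict T)) := by
      refine Integrable.mono' (integrable_const C) hFmeas.aestronglyMeasurable ?_
      rw [Measure.prod_restrict, ae_restrict_iff' (measurableSet_Ioc.prod measurableSet_Ioc)]
      exact Filter.Eventually.of_forall fun z hz => hFbd z hz
    -- Step A : rewrite as double set integral of F
    have stepA : (∫ s in (0:ℝ)..t, Φ (ℓ + 1) s)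
        = ∫ s in T, ∫ u in T, F (s, u) := by
      rw [intervalIntegral.integral_of_le ht0]
      apply setIntegral_congr_fun measurableSet_Ioc
      intro s hs
      have hs1 : s ∈ Set.Icc (0:ℝ) 1 := ⟨hs.1.le, hs.2.trans ht1⟩
      rw [ih s hs1, intervalIntegral.integral_of_le hs.1.le]
      have : ∀ u : ℝ, F (s, u) = (Set.Ioc (0:ℝ) s).indicator
          (fun u => f u * (s - u)^ℓ / (ℓ.factorial : ℝ)) u := by
        intro u
        rw [hF, Set.indicator_apply, Set.indicator_apply]
        simp only [hS, Set.mem_setOf_eq, Set.mem_Ioc]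
      simp_rw [this]
      rw [setIntegral_indicator measurableSet_Ioc]
      congr 1
      rw [Set.inter_eq_right.mpr (Set.Ioc_subset_Ioc_right hs.2)]
    -- Step B : Fubini
    have stepB : (∫ s in T, ∫ u in T, F (s, u)) = ∫ u in T, ∫ s in T, F (s, u) :=
      integral_integral_swap hFint
    -- Step C : evaluate inner integral
    have stepC : (∫ u in T, ∫ s in T, F (s, u))
        = ∫ u in T, f u * (t - u)^(ℓ+1) / ((ℓ+1).factorial : ℝ) := by
      apply setIntegral_congr_fun measurableSet_Ioc
      intro u hu
      have hut : u ≤ t := hu.2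
      have : ∀ s : ℝ, F (s, u) = (Set.Ici u).indicator
          (fun s => f u * (s - u)^ℓ / (ℓ.factorial : ℝ)) s := by
        intro s
        rw [hF, Set.indicator_apply, Set.indicator_apply]
        simp only [hS, Set.mem_setOf_eq, Set.mem_Ici, hu.1, true_and]
      simp_rw [this]
      rw [setIntegral_indicator measurableSet_Ici]
      have hTI : T ∩ Set.Ici u = Set.Icc u t := by
        ext s
        simp only [hT, Set.mem_inter_iff, Set.mem_Ioc, Set.mem_Ici, Set.mem_Icc]
        constructor
        · rintro ⟨⟨_, h2⟩, h3⟩; exact ⟨h3, h2⟩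
        · rintro ⟨h1, h2⟩; exact ⟨⟨lt_of_lt_of_le hu.1 h1, h2⟩, h1⟩
      rw [hTI, integral_Icc_eq_integral_Ioc, ← intervalIntegral.integral_of_le hut]
      have : (∫ s in u..t, f u * (s - u)^ℓ / (ℓ.factorial : ℝ))
          = (f u / (ℓ.factorial : ℝ)) * ∫ s in u..t, (s - u)^ℓ := by
        rw [← intervalIntegral.integral_const_mul]
        apply intervalIntegral.integral_congr
        intro s hs; ring
      rw [this]
      have : (∫ s in u..t, (s - u)^ℓ) = (t - u)^(ℓ+1) / (ℓ+1 : ℝ) := by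
        have := intervalIntegral.integral_comp_sub_right (fun x => x ^ ℓ) u (a := u) (b := t)
        rw [this, sub_self, integral_pow]
        push_cast; ring
      rw [this, Nat.factorial_succ]
      push_cast
      rw [div_mul_div_comm]
      ring
    rw [stepA, stepB, stepC, intervalIntegral.integral_of_le ht0]


/-- Boundary values of iterated antiderivatives of an orthonormal polynomial times the
density: `Φ_{κ,ℓ}(1) = 0` for `ℓ = 1,…,κ` and `Φ_{κ,κ+1}(1) = (−1)^κ/(a_κ κ!)`. -/
theorem ortho_poly_iterated_integral_boundary (κ : ℕ) (b₁ b₂ : ℝ)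
    (hb₁ : 0 < b₁) (hb : b₁ ≤ b₂)
    (lam : ℝ → ℝ) (hmeas : Measurable lam)
    (hlow : ∀ t ∈ Set.Icc (0:ℝ) 1, b₁ ≤ lam t)
    (hhigh : ∀ t ∈ Set.Icc (0:ℝ) 1, lam t ≤ b₂)
    (p : Polynomial ℝ) (hdeg : p.natDegree = κ) (hlead : 0 < p.leadingCoeff)
    (hnorm : ∫ t in (0:ℝ)..1, (p.eval t) ^ 2 * lam t = 1)
    (horth : ∀ q : Polynomial ℝ, q.degree < (κ : WithBot ℕ) →
      ∫ t in (0:ℝ)..1, p.eval t * q.eval t * lam t = 0)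
    (Φ : ℕ → ℝ → ℝ)
    (hΦ0 : ∀ t, Φ 0 t = p.eval t * lam t)
    (hΦs : ∀ ℓ t, Φ (ℓ + 1) t = ∫ u in (0:ℝ)..t, Φ ℓ u) :
    (∀ ℓ, 1 ≤ ℓ → ℓ ≤ κ → Φ ℓ 1 = 0) ∧
    Φ (κ + 1) 1 = (-1) ^ κ / (p.leadingCoeff * (κ.factorial : ℝ)) := by
  have hb₂ : 0 < b₂ := lt_of_lt_of_le hb₁ hb
  set f : ℝ → ℝ := fun u => p.eval u * lam u with hfdef
  have hfmeas : Measurable f := (p.continuous.measurable).mul hmeas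
  have hlamabs : ∀ u ∈ Set.Icc (0:ℝ) 1, |lam u| ≤ b₂ := by
    intro u hu
    rw [abs_of_pos (lt_of_lt_of_le hb₁ (hlow u hu))]
    exact hhigh u hu
  -- bound on p.eval on [0,1]
  obtain ⟨M, hM⟩ := isCompact_Icc.exists_bound_of_continuousOn
    (p.continuous.continuousOn (s := Set.Icc (0:ℝ) 1))
  set C : ℝ := max M 0 * b₂ with hCdef
  have hC : 0 ≤ C := mul_nonneg (le_max_right _ _) hb₂.le
  have hbd : ∀ u ∈ Set.Icc (0:ℝ) 1, |f u| ≤ C := by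
    intro u hu
    rw [hfdef, abs_mul]
    apply mul_le_mul _ (hlamabs u hu) (abs_nonneg _) (le_max_right _ _)
    exact le_trans (by simpa [Real.norm_eq_abs] using hM u hu) (le_max_left _ _)
  have hrep := repr_lemma f hfmeas C hC hbd Φ hΦ0 hΦs
  -- interval integrability of q.eval * lam for any polynomial q
  have key : ∀ q : Polynomial ℝ, IntervalIntegrable (fun u => q.eval u * lam u) volume 0 1 := by
    intro q
    obtain ⟨N, hN⟩ := isCompact_Icc.exists_bound_of_continuousOn
      (q.continuous.continuousOn (s := Set.Icc (0:ℝ) 1))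
    rw [intervalIntegrable_iff, Set.uIoc_of_le zero_le_one]
    refine Integrable.mono' (integrable_const (max N 0 * b₂))
      ((q.continuous.measurable.mul hmeas).aestronglyMeasurable) ?_
    rw [ae_restrict_iff' measurableSet_Ioc]
    apply Filter.Eventually.of_forall
    intro u hu
    have hu' : u ∈ Set.Icc (0:ℝ) 1 := ⟨hu.1.le, hu.2⟩
    rw [Real.norm_eq_abs, abs_mul]
    apply mul_le_mul _ (hlamabs u hu') (abs_nonneg _) (le_max_right _ _)
    exact le_trans (by simpa [Real.norm_eq_abs] using hN u hu') (le_max_left _ _)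
  -- rewriting Φ (n+1) 1 as an inner product with a polynomial
  have heval : ∀ n : ℕ, Φ (n + 1) 1 = ∫ u in (0:ℝ)..1,
      p.eval u * ((Polynomial.C ((n.factorial : ℝ))⁻¹ * (1 - Polynomial.X) ^ n).eval u)
        * lam u := by
    intro n
    rw [hrep n 1 ⟨zero_le_one, le_refl 1⟩]
    apply intervalIntegral.integral_congr
    intro u hu
    simp only [hfdef, Polynomial.eval_mul, Polynomial.eval_C, Polynomial.eval_pow,
      Polynomial.eval_sub, Polynomial.eval_one, Polynomial.eval_X]
    field_simp
  have hdegq : ∀ n : ℕ,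
      (Polynomial.C ((n.factorial : ℝ))⁻¹ * (1 - Polynomial.X) ^ n).natDegree ≤ n := by
    intro n
    refine le_trans (Polynomial.natDegree_C_mul_le _ _) ?_
    refine le_trans (Polynomial.natDegree_pow_le) ?_
    have h1X : (1 - Polynomial.X : Polynomial ℝ).natDegree = 1 := by
      rw [← Polynomial.natDegree_neg, neg_sub,
        show (1 : Polynomial ℝ) = Polynomial.C 1 from (Polynomial.C_1).symm,
        Polynomial.natDegree_X_sub_C]
    rw [h1X, mul_one]
  constructor
  · intro ℓ h1 h2
    obtain ⟨n, rfl⟩ : ∃ n, ℓ = n + 1 := ⟨ℓ - 1, by omega⟩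
    rw [heval n]
    apply horth
    have hnκ : n < κ := by omega
    refine lt_of_le_of_lt (Polynomial.degree_le_natDegree) ?_
    exact_mod_cast lt_of_le_of_lt (hdegq n) hnκ
  · -- the main value
    set qκ : Polynomial ℝ :=
      Polynomial.C ((κ.factorial : ℝ))⁻¹ * (1 - Polynomial.X) ^ κ with hqκ
    have ha : p.leadingCoeff ≠ 0 := ne_of_gt hlead
    have hfacne : ((κ.factorial : ℝ)) ≠ 0 := by positivity
    set c' : ℝ := ((-1 : ℝ) ^ κ / (κ.factorial : ℝ)) / p.leadingCoeff with hc'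
    set r : Polynomial ℝ := qκ - Polynomial.C c' * p with hr
    have hpk : p.coeff κ = p.leadingCoeff := by
      rw [Polynomial.leadingCoeff, hdeg]
    have hcoeffq : qκ.coeff κ = (-1 : ℝ) ^ κ / (κ.factorial : ℝ) := by
      rw [hqκ, Polynomial.coeff_C_mul]
      have h1 : (1 - Polynomial.X : Polynomial ℝ) ^ κ
          = Polynomial.C ((-1 : ℝ) ^ κ) * (Polynomial.X - Polynomial.C 1) ^ κ := by
        rw [map_pow, map_neg, map_one, ← mul_pow]
        ring
      rw [h1, Polynomial.coeff_C_mul]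
      have hmon : ((Polynomial.X - Polynomial.C (1:ℝ)) ^ κ).Monic :=
        (Polynomial.monic_X_sub_C 1).pow κ
      have hnd : ((Polynomial.X - Polynomial.C (1:ℝ)) ^ κ).natDegree = κ := by
        rw [Polynomial.natDegree_pow, Polynomial.natDegree_X_sub_C, mul_one]
      have := hmon.coeff_natDegree
      rw [hnd] at this
      rw [this, mul_one]
      field_simp
    have hrdeg : r.degree < (κ : WithBot ℕ) := by
      rw [Polynomial.degree_lt_iff_coeff_zero]
      intro m hm
      have hm' : κ ≤ m := by exact_mod_cast hm
      rw [hr, Polynomial.coeff_sub]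
      rcases eq_or_lt_of_le hm' with heq | hlt
      · subst heq
        rw [hcoeffq, Polynomial.coeff_C_mul, hpk, hc', div_mul_cancel₀ _ ha, sub_self]
      · have h1 : qκ.coeff m = 0 :=
          Polynomial.coeff_eq_zero_of_natDegree_lt (lt_of_le_of_lt (hdegq κ) hlt)
        have h2 : p.coeff m = 0 :=
          Polynomial.coeff_eq_zero_of_natDegree_lt (by rw [hdeg]; exact hlt)
        rw [h1, Polynomial.coeff_C_mul, h2, mul_zero, sub_zero]
    have int1 : IntervalIntegrable (fun u => c' * (p.eval u ^ 2 * lam u)) volume 0 1 := by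
      have h : (fun u => c' * (p.eval u ^ 2 * lam u))
          = fun u => (Polynomial.C c' * p * p).eval u * lam u := by
        funext u
        simp only [Polynomial.eval_mul, Polynomial.eval_C]
        ring
      rw [h]; exact key _
    have int2 : IntervalIntegrable (fun u => p.eval u * r.eval u * lam u) volume 0 1 := by
      have h : (fun u => p.eval u * r.eval u * lam u)
          = fun u => (p * r).eval u * lam u := by
        funext u
        simp only [Polynomial.eval_mul]
      rw [h]; exact key _
    have hsplit : (∫ u in (0:ℝ)..1, p.eval u * qκ.eval u * lam u)
        = (∫ u in (0:ℝ)..1, c' * (p.eval u ^ 2 * lam u))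
          + ∫ u in (0:ℝ)..1, p.eval u * r.eval u * lam u := by
      rw [← intervalIntegral.integral_add int1 int2]
      apply intervalIntegral.integral_congr
      intro u hu
      have h : r.eval u = qκ.eval u - c' * p.eval u := by
        rw [hr]; simp
      dsimp only
      rw [h]; ring
    rw [heval κ, ← hqκ, hsplit, intervalIntegral.integral_const_mul, hnorm,
      horth r hrdeg, mul_one, add_zero, hc']
    field_simp
end

section
/- Let k ≥ 0 and d ≥ 1 be integers with n = kd, and let V : ℝ^{n×kd} be the matrix whose i-th row is (X^i_1, (X^i_1)², …, (X^i_1)^k, …, X^i_d, …, (X^i_d)^k) for input points X^i ∈ [0,1]^d. Then the determinant of V, viewed as a polynomial in the nd entries X^i_j, is not identically zero; in particular, there exists an assignment of inputs for which V is invertible. Consequently, if the X^i are drawn i.i.d. from a continuous distribution on [0,1]^d and n ≥ kd, then V has full column rank almost surely. -/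
open MeasureTheory MvPolynomial

namespace VandermondeAux

lemma mv_zero_null : ∀ (N : ℕ) (p : MvPolynomial (Fin N) ℝ), p ≠ 0 →
    Measure.pi (fun _ : Fin N => (volume : Measure ℝ)) {x | eval x p = 0} = 0 := by
  intro N
  induction N with
  | zero =>
    intro p hp
    obtain ⟨c, rfl⟩ := C_surjective (Fin 0) p
    have hc : c ≠ 0 := fun h => hp (by rw [h, map_zero])
    have h2 : {x : Fin 0 → ℝ | eval x (C c) = 0} = ∅ := by
      ext x; simp [hc]
    rw [h2]
    simp
  | succ N ih =>
    intro p hp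
    set q := MvPolynomial.finSuccEquiv ℝ N p with hq
    have hq0 : q ≠ 0 := by
      intro h
      exact hp ((MvPolynomial.finSuccEquiv ℝ N).injective (by rw [← hq, h, map_zero]))
    have hc0 : q.leadingCoeff ≠ 0 := Polynomial.leadingCoeff_ne_zero.mpr hq0
    have hae : ∀ᵐ y ∂(Measure.pi fun _ : Fin N => (volume : Measure ℝ)), eval y q.leadingCoeff ≠ 0 := by
      rw [ae_iff]
      simpa using ih q.leadingCoeff hc0
    have key : ∀ y : Fin N → ℝ, eval y q.leadingCoeff ≠ 0 →
        (volume : Measure ℝ) {a : ℝ | eval (Fin.cons a y) p = 0} = 0 := by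
      intro y hy
      have hmap : q.map (eval y) ≠ 0 := by
        intro h
        apply hy
        have h2 := congrArg (fun r => Polynomial.coeff r q.natDegree) h
        simp only [Polynomial.coeff_map, Polynomial.coeff_zero] at h2
        exact h2
      have hset : {a : ℝ | eval (Fin.cons a y) p = 0} = {a | (q.map (eval y)).IsRoot a} := by
        ext a
        simp [eval_eq_eval_mv_eval', Polynomial.IsRoot, hq]
      rw [hset]
      exact (Polynomial.finite_setOf_isRoot hmap).measure_zero _
    -- measurability
    have hmeasU : MeasurableSet {z : (Fin N → ℝ) × ℝ | eval (Fin.cons z.2 z.1) p = 0} := by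
      have hcont : Continuous fun z : (Fin N → ℝ) × ℝ => eval (Fin.cons z.2 z.1) p := by
        apply (MvPolynomial.continuous_eval p).comp
        apply continuous_pi
        intro i
        refine Fin.cases ?_ ?_ i
        · simpa using continuous_snd
        · intro j
          simpa [Function.comp_def] using (continuous_apply j).comp continuous_fst
      exact hcont.measurable (measurableSet_singleton 0)
    have hU : ((Measure.pi fun _ : Fin N => (volume : Measure ℝ)).prod volume)
        {z : (Fin N → ℝ) × ℝ | eval (Fin.cons z.2 z.1) p = 0} = 0 := by
      rw [Measure.measure_prod_null hmeasU]
      filter_upwards [hae] with y hy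
      exact key y hy
    -- transfer via swap
    have hmeasT : MeasurableSet {z : ℝ × (Fin N → ℝ) | eval (Fin.cons z.1 z.2) p = 0} := by
      have hcont : Continuous fun z : ℝ × (Fin N → ℝ) => eval (Fin.cons z.1 z.2) p := by
        apply (MvPolynomial.continuous_eval p).comp
        apply continuous_pi
        intro i
        refine Fin.cases ?_ ?_ i
        · simpa using continuous_fst
        · intro j
          simpa [Function.comp_def] using (continuous_apply j).comp continuous_snd
      exact hcont.measurable (measurableSet_singleton 0)
    have hT : ((volume : Measure ℝ).prod (Measure.pi fun _ : Fin N => (volume : Measure ℝ)))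
        {z : ℝ × (Fin N → ℝ) | eval (Fin.cons z.1 z.2) p = 0} = 0 := by
      rw [← Measure.measurePreserving_swap.measure_preimage hmeasT.nullMeasurableSet]
      exact hU
    -- transfer via piFinSuccAbove
    have mp := measurePreserving_piFinSuccAbove (fun _ : Fin (N + 1) => (volume : Measure ℝ)) 0
    have hSpre : {x : Fin (N + 1) → ℝ | eval x p = 0} =
        (MeasurableEquiv.piFinSuccAbove (fun _ : Fin (N + 1) => ℝ) 0) ⁻¹'
          {z : ℝ × (Fin N → ℝ) | eval (Fin.cons z.1 z.2) p = 0} := by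
      ext x
      have hx : (Fin.cons (x 0) (fun j => x ((0 : Fin (N+1)).succAbove j)) : Fin (N+1) → ℝ) = x := by
        ext i
        refine Fin.cases ?_ ?_ i
        · simp
        · intro j; simp [Fin.zero_succAbove]
      have hx2 : (Fin.cons ((MeasurableEquiv.piFinSuccAbove (fun _ : Fin (N+1) => ℝ) 0) x).1
          ((MeasurableEquiv.piFinSuccAbove (fun _ : Fin (N+1) => ℝ) 0) x).2 : Fin (N+1) → ℝ) = x := by
        simp only [MeasurableEquiv.piFinSuccAbove_apply]
        exact hx
      simp only [Set.mem_setOf_eq, Set.mem_preimage, hx2]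
    rw [hSpre, mp.measure_preimage hmeasT.nullMeasurableSet]
    exact hT

lemma mv_zero_null' (σ : Type) [Fintype σ] (p : MvPolynomial σ ℝ) (hp : p ≠ 0) :
    Measure.pi (fun _ : σ => (volume : Measure ℝ)) {x | eval x p = 0} = 0 := by
  classical
  set e := Fintype.equivFin σ with he
  have hp' : rename e p ≠ 0 := fun h => hp (rename_injective _ e.injective (by rw [h, map_zero]))
  have mp := measurePreserving_piCongrLeft (fun _ : σ => (volume : Measure ℝ)) e.symm
  have hmeas : MeasurableSet {x : σ → ℝ | eval x p = 0} :=
    (MvPolynomial.continuous_eval p).measurable (measurableSet_singleton 0)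
  rw [← mp.measure_preimage hmeas.nullMeasurableSet]
  have hpre : (MeasurableEquiv.piCongrLeft (fun _ : σ => ℝ) e.symm) ⁻¹' {x : σ → ℝ | eval x p = 0}
      = {y : Fin (Fintype.card σ) → ℝ | eval y (rename e p) = 0} := by
    ext y
    have hfun : (MeasurableEquiv.piCongrLeft (fun _ : σ => ℝ) e.symm) y = fun s => y (e s) := by
      funext s
      have h1 := MeasurableEquiv.piCongrLeft_apply_apply (β := fun _ : σ => ℝ) e.symm y (e s)
      rw [Equiv.symm_apply_apply] at h1
      exact h1
    simp only [Set.mem_preimage, Set.mem_setOf_eq, hfun, eval_rename]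
    rfl
  rw [hpre]
  exact mv_zero_null _ _ hp'

/-- curry as measurable equiv -/
def curryME (ι κ : Type) [Fintype ι] [Fintype κ] : ((ι × κ) → ℝ) ≃ᵐ (ι → κ → ℝ) where
  toEquiv := Equiv.curry ι κ ℝ
  measurable_toFun := by
    apply measurable_pi_lambda
    intro i
    apply measurable_pi_lambda
    intro j
    exact measurable_pi_apply (i, j)
  measurable_invFun := by
    apply measurable_pi_lambda
    intro q
    exact (measurable_pi_apply q.2).comp (measurable_pi_apply q.1)

lemma curry_mp (ι κ : Type) [Fintype ι] [Fintype κ] :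
    MeasurePreserving (curryME ι κ).symm
      (Measure.pi (fun _ : ι => Measure.pi (fun _ : κ => (volume : Measure ℝ))))
      (Measure.pi (fun _ : ι × κ => (volume : Measure ℝ))) := by
  refine ⟨(curryME ι κ).symm.measurable, ?_⟩
  refine (Measure.pi_eq fun s hs => ?_).symm
  rw [MeasurableEquiv.map_apply]
  have hpre : (curryME ι κ).symm ⁻¹' Set.pi Set.univ s
      = Set.pi Set.univ (fun i => Set.pi Set.univ (fun j => s (i, j))) := by
    ext Y
    simp only [Set.mem_preimage, Set.mem_pi, Set.mem_univ, true_implies, Prod.forall]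
    rfl
  rw [hpre, Measure.pi_pi]
  simp_rw [Measure.pi_pi]
  rw [Fintype.prod_prod_type]

lemma mv_zero_null_nested (ι κ : Type) [Fintype ι] [Fintype κ]
    (P : MvPolynomial (ι × κ) ℝ) (hP : P ≠ 0) :
    Measure.pi (fun _ : ι => Measure.pi (fun _ : κ => (volume : Measure ℝ)))
      {Y : ι → κ → ℝ | eval (fun q => Y q.1 q.2) P = 0} = 0 := by
  have hmeas : MeasurableSet {z : ι × κ → ℝ | eval z P = 0} :=
    (MvPolynomial.continuous_eval P).measurable (measurableSet_singleton 0)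
  have := (curry_mp ι κ).measure_preimage hmeas.nullMeasurableSet
  have hpre : (curryME ι κ).symm ⁻¹' {z : ι × κ → ℝ | eval z P = 0}
      = {Y : ι → κ → ℝ | eval (fun q => Y q.1 q.2) P = 0} := by
    ext Y
    simp only [Set.mem_preimage, Set.mem_setOf_eq]
    constructor <;> intro h <;> convert h using 2 <;> rfl
  rw [hpre] at this
  rw [this]
  exact mv_zero_null' _ P hP

lemma pi_ac {E : Type} [MeasurableSpace E] {μ ν : Measure E} [IsProbabilityMeasure μ]
    [SigmaFinite ν] (h : μ ≪ ν) :
    ∀ m : ℕ, Measure.pi (fun _ : Fin m => μ) ≪ Measure.pi (fun _ : Fin m => ν) := by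
  intro m
  induction m with
  | zero =>
    rw [Measure.pi_of_empty (fun _ : Fin 0 => μ), Measure.pi_of_empty (fun _ : Fin 0 => ν)]
  | succ m ih =>
    have h1 := measurePreserving_piFinSuccAbove (fun _ : Fin (m + 1) => μ) 0
    have h2 := measurePreserving_piFinSuccAbove (fun _ : Fin (m + 1) => ν) 0
    have e := MeasurableEquiv.piFinSuccAbove (fun _ : Fin (m + 1) => E) 0
    have hμ : Measure.pi (fun _ : Fin (m + 1) => μ) =
        Measure.map (MeasurableEquiv.piFinSuccAbove (fun _ : Fin (m + 1) => E) 0).symm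
          (μ.prod (Measure.pi fun _ : Fin m => μ)) := by
      rw [← h1.map_eq, MeasurableEquiv.map_symm_map]
    have hν : Measure.pi (fun _ : Fin (m + 1) => ν) =
        Measure.map (MeasurableEquiv.piFinSuccAbove (fun _ : Fin (m + 1) => E) 0).symm
          (ν.prod (Measure.pi fun _ : Fin m => ν)) := by
      rw [← h2.map_eq, MeasurableEquiv.map_symm_map]
    rw [hμ, hν]
    exact (h.prod ih).map (MeasurableEquiv.piFinSuccAbove (fun _ : Fin (m + 1) => E) 0).symm.measurable

lemma proj_null {E : Type} [MeasurableSpace E] (μ : Measure E) [IsProbabilityMeasure μ]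
    {m n : ℕ} (h : m ≤ n) {A : Set (Fin m → E)} (hA : MeasurableSet A)
    (h0 : Measure.pi (fun _ : Fin m => μ) A = 0) :
    Measure.pi (fun _ : Fin n => μ) {X : Fin n → E | (fun i => X (Fin.castLE h i)) ∈ A} = 0 := by
  have heq : m + (n - m) = n := Nat.add_sub_cancel' h
  set e1 : Fin m ⊕ Fin (n - m) ≃ Fin n := finSumFinEquiv.trans (finCongr heq) with he1
  have mp1 := measurePreserving_piCongrLeft (fun _ : Fin n => μ) e1
  have mp2 := measurePreserving_sumPiEquivProdPi_symm
    (fun _ : Fin m ⊕ Fin (n - m) => μ)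
  have mp := mp1.comp mp2
  have hS : MeasurableSet {X : Fin n → E | (fun i => X (Fin.castLE h i)) ∈ A} := by
    have : Measurable fun (X : Fin n → E) (i : Fin m) => X (Fin.castLE h i) :=
      measurable_pi_lambda _ fun i => measurable_pi_apply _
    exact this hA
  rw [← mp.measure_preimage hS.nullMeasurableSet]
  have hpre : (⇑(MeasurableEquiv.piCongrLeft (fun _ : Fin n => E) e1) ∘
        ⇑(MeasurableEquiv.sumPiEquivProdPi (fun _ : Fin m ⊕ Fin (n - m) => E)).symm) ⁻¹'
        {X : Fin n → E | (fun i => X (Fin.castLE h i)) ∈ A}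
      = A ×ˢ Set.univ := by
    ext z
    simp only [Set.mem_preimage, Set.mem_setOf_eq, Set.mem_prod, Set.mem_univ, and_true,
      Function.comp_apply]
    have hfun : (fun i : Fin m =>
        (MeasurableEquiv.piCongrLeft (fun _ : Fin n => E) e1)
          ((MeasurableEquiv.sumPiEquivProdPi (fun _ : Fin m ⊕ Fin (n - m) => E)).symm z)
          (Fin.castLE h i)) = z.1 := by
      funext i
      have h1 : Fin.castLE h i = e1 (Sum.inl i) := by
        apply Fin.ext
        simp [he1]
      rw [h1]
      have h2 := MeasurableEquiv.piCongrLeft_apply_apply (β := fun _ : Fin n => E) e1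
        ((MeasurableEquiv.sumPiEquivProdPi (fun _ : Fin m ⊕ Fin (n - m) => E)).symm z)
        (Sum.inl i)
      rw [h2]
      rfl
    rw [hfun]
  rw [hpre, Measure.prod_prod, h0, zero_mul]

lemma witness_det (k d : ℕ) (hk : 0 < k) (hd : 0 < d) (e : Fin (k * d) ≃ Fin d × Fin k) :
    ∃ X : Fin (k * d) → Fin d → ℝ,
      (∀ i j, X i j ∈ Set.Icc (0:ℝ) 1) ∧
      (Matrix.of fun (i : Fin (k * d)) (c : Fin (k * d)) =>
        X i (e c).1 ^ (((e c).2 : ℕ) + 1)).det ≠ 0 := by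
  classical
  set α : Fin k → ℝ := fun ℓ => ((ℓ : ℕ) + 1 : ℝ) / k with hα
  have hαpos : ∀ ℓ, 0 < α ℓ := fun ℓ => by
    apply div_pos (by positivity) (by exact_mod_cast hk)
  have hαle : ∀ ℓ, α ℓ ≤ 1 := fun ℓ => by
    rw [hα]
    apply div_le_one_of_le₀
    · exact_mod_cast Nat.succ_le_of_lt ℓ.isLt
    · positivity
  have hαinj : Function.Injective α := by
    intro a b hab
    have hk' : (k : ℝ) ≠ 0 := by exact_mod_cast hk.ne'
    simp only [hα] at hab
    rw [div_left_inj' hk'] at hab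
    exact Fin.ext (by exact_mod_cast add_right_cancel hab)
  refine ⟨fun i j => if (e i).1 = j then α (e i).2 else 0, ?_, ?_⟩
  · intro i j
    simp only
    constructor
    · split_ifs
      · exact (hαpos _).le
      · exact le_refl 0
    · split_ifs
      · exact hαle _
      · exact zero_le_one
  · -- the determinant
    beta_reduce
    set W : Matrix (Fin k) (Fin k) ℝ := Matrix.of fun ℓ p => α ℓ ^ ((p : ℕ) + 1) with hW
    set N : Matrix (Fin d × Fin k) (Fin d × Fin k) ℝ :=
      Matrix.of fun r c => if r.1 = c.1 then α r.2 ^ ((c.2 : ℕ) + 1) else 0 with hN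
    have hM : (Matrix.of fun (i : Fin (k * d)) (c : Fin (k * d)) =>
        (if (e i).1 = (e c).1 then α (e i).2 else 0) ^ (((e c).2 : ℕ) + 1)) = N.submatrix e e := by
      ext i c
      simp only [Matrix.of_apply, Matrix.submatrix_apply, hN]
      split_ifs with hif
      · rfl
      · exact zero_pow (Nat.succ_ne_zero _)
    rw [hM, Matrix.det_submatrix_equiv_self]
    have hNblock : N = (Matrix.blockDiagonal fun _ : Fin d => W).submatrix
        (Equiv.prodComm (Fin d) (Fin k)) (Equiv.prodComm (Fin d) (Fin k)) := by
      ext r c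
      simp only [Matrix.submatrix_apply, Matrix.blockDiagonal_apply, Equiv.prodComm_apply,
        Prod.swap_prod_mk, hN, hW, Matrix.of_apply]
      rcases r with ⟨r1, r2⟩; rcases c with ⟨c1, c2⟩
      by_cases hrc : r1 = c1 <;> simp [hrc]
    rw [hNblock, Matrix.det_submatrix_equiv_self, Matrix.det_blockDiagonal]
    have hdetW : W.det ≠ 0 := by
      have hWeq : W = Matrix.of fun ℓ p => α ℓ * (Matrix.vandermonde α) ℓ p := by
        ext ℓ p
        simp [hW, Matrix.vandermonde, pow_succ, mul_comm]
      rw [hWeq, Matrix.det_mul_column]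
      apply mul_ne_zero
      · exact Finset.prod_ne_zero_iff.mpr fun ℓ _ => (hαpos ℓ).ne'
      · exact Matrix.det_vandermonde_ne_zero_iff.mpr hαinj
    rw [Finset.prod_const]
    exact pow_ne_zero _ hdetW

end VandermondeAux

open VandermondeAux

/-- The determinant of the blockwise-Vandermonde polynomial basis matrix is not identically
zero (witnessed by some inputs in `[0,1]^d`), and for i.i.d. draws from a continuous
distribution on `[0,1]^d` with `n ≥ kd` the matrix has full column rank almost surely. -/
theorem vandermonde_basis_generic_rank (k d : ℕ) (hk : 0 < k) (hd : 0 < d)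
    (n : ℕ) (hn : k * d ≤ n) (μ : Measure (Fin d → ℝ)) [IsProbabilityMeasure μ]
    (hac : μ ≪ volume) :
    (∀ e : Fin (k * d) ≃ Fin d × Fin k,
      ∃ X : Fin (k * d) → Fin d → ℝ,
        (∀ i j, X i j ∈ Set.Icc (0:ℝ) 1) ∧
        (Matrix.of fun (i : Fin (k * d)) (c : Fin (k * d)) =>
          X i (e c).1 ^ (((e c).2 : ℕ) + 1)).det ≠ 0) ∧
    ∀ᵐ X ∂(Measure.pi fun _ : Fin n => μ),
      (Matrix.of fun (i : Fin n) (c : Fin d × Fin k) =>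
        X i c.1 ^ ((c.2 : ℕ) + 1)).rank = k * d := by
  classical
  refine ⟨fun e => witness_det k d hk hd e, ?_⟩
  set e0 : Fin (k * d) ≃ Fin d × Fin k :=
    (finCongr (Nat.mul_comm k d)).trans finProdFinEquiv.symm with he0
  -- the determinant function on k*d points
  set G : (Fin (k * d) → Fin d → ℝ) → ℝ := fun Y =>
    (Matrix.of fun (i : Fin (k * d)) (c : Fin (k * d)) =>
      Y i (e0 c).1 ^ (((e0 c).2 : ℕ) + 1)).det with hG
  -- the polynomial
  set P : MvPolynomial (Fin (k * d) × Fin d) ℝ :=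
    (Matrix.of fun (i : Fin (k * d)) (c : Fin (k * d)) =>
      (MvPolynomial.X (i, (e0 c).1) : MvPolynomial (Fin (k * d) × Fin d) ℝ)
        ^ (((e0 c).2 : ℕ) + 1)).det with hP
  have hGP : ∀ Y : Fin (k * d) → Fin d → ℝ, G Y = eval (fun q => Y q.1 q.2) P := by
    intro Y
    have hmat : (Matrix.of fun (i : Fin (k * d)) (c : Fin (k * d)) =>
        Y i (e0 c).1 ^ (((e0 c).2 : ℕ) + 1))
        = ((eval (fun q : Fin (k * d) × Fin d => Y q.1 q.2)).mapMatrix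
          (Matrix.of fun (i : Fin (k * d)) (c : Fin (k * d)) =>
            (MvPolynomial.X (i, (e0 c).1) : MvPolynomial (Fin (k * d) × Fin d) ℝ)
              ^ (((e0 c).2 : ℕ) + 1))) := by
      ext i c
      simp [RingHom.mapMatrix_apply]
    rw [hG, hP, RingHom.map_det, ← hmat]
  have hPne : P ≠ 0 := by
    intro hzero
    obtain ⟨Xw, _, hdet⟩ := witness_det k d hk hd e0
    apply hdet
    have := hGP Xw
    rw [hzero, map_zero] at this
    exact this
  set A : Set (Fin (k * d) → Fin d → ℝ) := {Y | G Y = 0} with hA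
  have hGcont : Continuous G := by
    apply Continuous.matrix_det
    apply continuous_matrix
    intro i c
    exact ((continuous_apply ((e0 c).1)).comp (continuous_apply i)).pow _
  have hAmeas : MeasurableSet A := hGcont.measurable (measurableSet_singleton 0)
  have hAvol : Measure.pi (fun _ : Fin (k * d) => (volume : Measure (Fin d → ℝ))) A = 0 := by
    have hvol : (volume : Measure (Fin d → ℝ)) = Measure.pi (fun _ : Fin d => volume) :=
      volume_pi
    rw [hvol]
    have hAeq : A = {Y : Fin (k * d) → Fin d → ℝ | eval (fun q => Y q.1 q.2) P = 0} := by
      ext Y; simp only [hA, Set.mem_setOf_eq, hGP]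
    rw [hAeq]
    exact mv_zero_null_nested _ _ P hPne
  have hAμ : Measure.pi (fun _ : Fin (k * d) => μ) A = 0 := pi_ac hac (k * d) hAvol
  have hproj := proj_null μ hn hAmeas hAμ
  rw [ae_iff]
  have hsub : {X : Fin n → Fin d → ℝ | ¬ (Matrix.of fun (i : Fin n) (c : Fin d × Fin k) =>
        X i c.1 ^ ((c.2 : ℕ) + 1)).rank = k * d}
      ⊆ {X : Fin n → Fin d → ℝ | (fun i => X (Fin.castLE hn i)) ∈ A} := by
    intro X hX
    simp only [Set.mem_setOf_eq] at hX ⊢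
    by_contra hXA
    apply hX
    -- rank argument
    set M : Matrix (Fin n) (Fin d × Fin k) ℝ := Matrix.of fun i c => X i c.1 ^ ((c.2 : ℕ) + 1)
      with hM
    have hdet : (M.submatrix (Fin.castLE hn) e0.toFun).det ≠ 0 := by
      have : G (fun i => X (Fin.castLE hn i)) ≠ 0 := hXA
      convert this using 2
      rfl
    have hinj : Function.Injective M.mulVecLin := by
      rw [← LinearMap.ker_eq_bot, LinearMap.ker_eq_bot']
      intro v hv
      have hv' : M.mulVec v = 0 := hv
      have hsq : (M.submatrix (Fin.castLE hn) e0.toFun).mulVec (v ∘ e0) = 0 := by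
        funext i
        have : ((M.submatrix (Fin.castLE hn) e0.toFun).mulVec (v ∘ e0)) i
            = (M.mulVec v) (Fin.castLE hn i) := by
          simp only [Matrix.mulVec, dotProduct, Matrix.submatrix_apply,
            Function.comp_apply]
          exact Equiv.sum_comp e0 (fun c' => M (Fin.castLE hn i) c' * v c')
        rw [this, hv']
        rfl
      have hz := Matrix.eq_zero_of_mulVec_eq_zero hdet hsq
      funext c'
      have := congrFun hz (e0.symm c')
      simpa using this
    have hrank : M.rank = Fintype.card (Fin d × Fin k) := by
      rw [Matrix.rank, LinearMap.finrank_range_of_inj hinj,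
        Module.finrank_fintype_fun_eq_card]
    rw [hM] at hrank
    rw [hrank]
    simp [Nat.mul_comm]
  exact measure_mono_null hsub hproj
end

section
/- Let f_j = Σ_{ℓ=1}^n α_j^ℓ h_ℓ be a linear combination of the k-th order falling factorial basis functions with knots t¹ < ⋯ < tⁿ. Then the k-th derivative of f_j satisfies f_j^{(k)}(t) = k!·α^{k+1} + k!·Σ_{ℓ=k+2}^n α^ℓ·1{t > t^{ℓ−1}} (piecewise constant), and hence the total variation of f_j^{(k)} equals k!·Σ_{ℓ=k+2}^n |α^ℓ|. -/
private lemma iteratedDeriv_polyEval (n : ℕ) (p : Polynomial ℝ) :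
    iteratedDeriv n (fun x => p.eval x) = fun x => (Polynomial.derivative^[n] p).eval x := by
  induction n generalizing p with
  | zero => simp
  | succ n ih =>
    rw [iteratedDeriv_succ']
    have hd : deriv (fun x => p.eval x) = fun x => p.derivative.eval x :=
      funext fun x => Polynomial.deriv p
    rw [hd, ih, Function.iterate_succ_apply]

private lemma natDegree_prod_X_sub_C (s : Finset ℕ) (t : ℕ → ℝ) :
    (∏ ℓ ∈ s, (Polynomial.X - Polynomial.C (t ℓ))).natDegree = s.card := by
  rw [Polynomial.natDegree_prod_of_monic _ _ (fun i _ => Polynomial.monic_X_sub_C _)]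
  simp

private lemma iterate_derivative_prod_lt (k : ℕ) (s : Finset ℕ) (t : ℕ → ℝ)
    (h : s.card < k) :
    Polynomial.derivative^[k] (∏ ℓ ∈ s, (Polynomial.X - Polynomial.C (t ℓ))) = 0 :=
  Polynomial.iterate_derivative_eq_zero (by rw [natDegree_prod_X_sub_C]; exact h)

private lemma iterate_derivative_prod_eq (k : ℕ) (s : Finset ℕ) (t : ℕ → ℝ)
    (h : s.card = k) :
    Polynomial.derivative^[k] (∏ ℓ ∈ s, (Polynomial.X - Polynomial.C (t ℓ)))
      = Polynomial.C (k.factorial : ℝ) := by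
  set P : Polynomial ℝ := ∏ ℓ ∈ s, (Polynomial.X - Polynomial.C (t ℓ)) with hPdef
  have hmonic : P.Monic := Polynomial.monic_prod_of_monic _ _ fun i _ => Polynomial.monic_X_sub_C _
  have hdeg : P.natDegree = k := (natDegree_prod_X_sub_C s t).trans h
  have hle := Polynomial.natDegree_iterate_derivative P k
  rw [hdeg] at hle
  have h0 : (Polynomial.derivative^[k] P).natDegree ≤ 0 := by omega
  rw [Polynomial.eq_C_of_natDegree_le_zero h0, Polynomial.coeff_iterate_derivative]
  have hck : P.coeff (0 + k) = 1 := by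
    rw [zero_add, ← hdeg]; exact hmonic.coeff_natDegree
  rw [hck, zero_add, Nat.descFactorial_self]
  simp

/-- For a linear combination `f = ∑ₘ αₘ hₘ` of `k`-th order falling factorial basis
functions with knots `t₀ < t₁ < ⋯ < t_{n-1}`, away from the knots the `k`-th derivative
is the piecewise-constant function
`D(x) = k!·α_k + k!·∑_{m=k+1}^{n-1} αₘ·1{x > t_{m-1}}`, and the total variation of `D`
equals `k!·∑_{m=k+1}^{n-1} |αₘ|`. -/
theorem falling_factorial_deriv_and_tv (k n : ℕ) (hn : k + 1 ≤ n)
    (t : ℕ → ℝ) (ht : ∀ i j : ℕ, i < j → j < n → t i < t j)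
    (α : ℕ → ℝ) :
    let h : ℕ → ℝ → ℝ := fun m x =>
      if m < k + 1 then ∏ ℓ ∈ Finset.range m, (x - t ℓ)
      else (∏ ℓ ∈ Finset.Ico (m - k) m, (x - t ℓ)) * (if t (m - 1) < x then 1 else 0)
    let f : ℝ → ℝ := fun x => ∑ m ∈ Finset.range n, α m * h m x
    let D : ℝ → ℝ := fun x =>
      (k.factorial : ℝ) * α k +
        (k.factorial : ℝ) *
          ∑ m ∈ Finset.Ico (k + 1) n, α m * (if t (m - 1) < x then 1 else 0)
    (∀ x : ℝ, (∀ m < n, x ≠ t m) → iteratedDeriv k f x = D x) ∧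
    eVariationOn D Set.univ =
      ENNReal.ofReal ((k.factorial : ℝ) * ∑ m ∈ Finset.Ico (k + 1) n, |α m|) := by
  intro h f D
  constructor
  · intro x hx
    classical
    set c : ℕ → ℝ := fun m => if m < k + 1 then 1 else if t (m - 1) < x then 1 else 0 with hc
    set P : ℕ → Polynomial ℝ := fun m =>
      if m < k + 1 then ∏ ℓ ∈ Finset.range m, (Polynomial.X - Polynomial.C (t ℓ))
      else ∏ ℓ ∈ Finset.Ico (m - k) m, (Polynomial.X - Polynomial.C (t ℓ)) with hP
    set Q : Polynomial ℝ := ∑ m ∈ Finset.range n, Polynomial.C (α m * c m) * P m with hQ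
    have hev : f =ᶠ[nhds x] fun y => Q.eval y := by
      have hind : ∀ᶠ y in nhds x, ∀ m ∈ Finset.range n,
          (if t (m - 1) < y then (1:ℝ) else 0) = (if t (m - 1) < x then (1:ℝ) else 0) := by
        rw [Filter.eventually_all_finset]
        intro m hm
        have hmn : m - 1 < n := by
          have := Finset.mem_range.mp hm; omega
        rcases lt_or_gt_of_ne (Ne.symm (hx (m - 1) hmn)) with hlt | hgt
        · filter_upwards [lt_mem_nhds hlt] with y hy
          rw [if_pos hy, if_pos hlt]
        · filter_upwards [gt_mem_nhds hgt] with y hy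
          rw [if_neg (not_lt.mpr hy.le), if_neg (not_lt.mpr hgt.le)]
      filter_upwards [hind] with y hy
      simp only [f, h, hQ, Polynomial.eval_finset_sum, Polynomial.eval_mul, Polynomial.eval_C]
      refine Finset.sum_congr rfl fun m hm => ?_
      by_cases hmk : m < k + 1
      · simp only [hP, hc, if_pos hmk, mul_one, Polynomial.eval_prod, Polynomial.eval_sub,
          Polynomial.eval_X, Polynomial.eval_C]
      · simp only [hP, hc, if_neg hmk, Polynomial.eval_prod, Polynomial.eval_sub,
          Polynomial.eval_X, Polynomial.eval_C]
        rw [hy m hm]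
        ring
    rw [Filter.EventuallyEq.iteratedDeriv_eq k hev, iteratedDeriv_polyEval]
    rw [hQ, Polynomial.iterate_derivative_sum]
    simp only [Polynomial.iterate_derivative_C_mul]
    rw [Polynomial.eval_finset_sum]
    have hterm : ∀ m ∈ Finset.range n,
        (Polynomial.C (α m * c m) * Polynomial.derivative^[k] (P m)).eval x
          = if m < k then 0 else
            if m = k then α k * (k.factorial : ℝ)
            else α m * c m * (k.factorial : ℝ) := by
      intro m hm
      by_cases hmk : m < k + 1
      · simp only [hP, if_pos hmk]
        rcases Nat.lt_or_ge m k with hlt | hge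
        · rw [iterate_derivative_prod_lt k _ t (by simpa using hlt)]
          simp [hlt]
        · have hmeq : m = k := by omega
          rw [hmeq, iterate_derivative_prod_eq k _ t (by simp)]
          simp [hc, Polynomial.eval_mul]
      · have hcard : (Finset.Ico (m - k) m).card = k := by
          rw [Nat.card_Ico]; omega
        simp only [hP, if_neg hmk]
        rw [iterate_derivative_prod_eq k _ t hcard]
        have h1 : ¬ m < k := by omega
        have h2 : m ≠ k := by omega
        simp [h1, h2, Polynomial.eval_mul]
    rw [Finset.sum_congr rfl hterm]
    rw [Finset.range_eq_Ico, ← Finset.sum_Ico_consecutive _ (Nat.zero_le (k+1)) hn]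
    have hfirst : ∑ m ∈ Finset.Ico 0 (k + 1),
        (if m < k then (0:ℝ) else if m = k then α k * (k.factorial : ℝ)
          else α m * c m * (k.factorial : ℝ)) = (k.factorial : ℝ) * α k := by
      rw [Finset.sum_eq_single k]
      · simp [mul_comm]
      · intro b hb hbk
        have : b < k := by
          have := (Finset.mem_Ico.mp hb).2; omega
        simp [this]
      · intro hk
        exact absurd (Finset.mem_Ico.mpr ⟨Nat.zero_le _, by omega⟩) hk
    have hsecond : ∑ m ∈ Finset.Ico (k + 1) n,
        (if m < k then (0:ℝ) else if m = k then α k * (k.factorial : ℝ)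
          else α m * c m * (k.factorial : ℝ))
        = (k.factorial : ℝ) * ∑ m ∈ Finset.Ico (k + 1) n,
            α m * (if t (m - 1) < x then 1 else 0) := by
      rw [Finset.mul_sum]
      refine Finset.sum_congr rfl fun m hm => ?_
      have hm1 := (Finset.mem_Ico.mp hm).1
      have h1 : ¬ m < k := by omega
      have h2 : m ≠ k := by omega
      have h3 : ¬ m < k + 1 := by omega
      simp only [if_neg h1, if_neg h2, hc, if_neg h3]
      ring
    rw [hfirst, hsecond]
  · classical
    set N := n - (k + 1) with hN
    set ind : ℕ → ℝ → ℝ := fun m y => if t (m - 1) < y then 1 else 0 with hind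
    have hind01 : ∀ m y, 0 ≤ ind m y ∧ ind m y ≤ 1 := by
      intro m y; simp only [hind]; split <;> norm_num
    have hindmono : ∀ m, Monotone (ind m) := by
      intro m a b hab
      simp only [hind]
      by_cases h1 : t (m - 1) < a
      · rw [if_pos h1, if_pos (h1.trans_le hab)]
      · rw [if_neg h1]; split <;> norm_num
    have hD : ∀ a b : ℝ, D b - D a
        = ∑ m ∈ Finset.Ico (k + 1) n, (k.factorial : ℝ) * α m * (ind m b - ind m a) := by
      intro a b
      simp only [D, hind, Finset.mul_sum]
      rw [add_sub_add_left_eq_sub, ← Finset.sum_sub_distrib]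
      exact Finset.sum_congr rfl fun m _ => by ring
    have hedist : ∀ a b : ℝ, edist (D b) (D a) = ENNReal.ofReal |D b - D a| := by
      intro a b; rw [edist_dist, Real.dist_eq]
    have hfactnn : (0:ℝ) ≤ (k.factorial : ℝ) := by positivity
    refine le_antisymm ?_ ?_
    · rw [eVariationOn]
      refine iSup_le ?_
      rintro ⟨N', u, hu, -⟩
      calc ∑ i ∈ Finset.range N', edist (D (u (i + 1))) (D (u i))
          ≤ ∑ i ∈ Finset.range N', ENNReal.ofReal
              (∑ m ∈ Finset.Ico (k + 1) n,
                (k.factorial : ℝ) * |α m| * (ind m (u (i + 1)) - ind m (u i))) := by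
            refine Finset.sum_le_sum fun i _ => ?_
            rw [hedist, hD]
            refine ENNReal.ofReal_le_ofReal ?_
            refine (Finset.abs_sum_le_sum_abs _ _).trans ?_
            refine Finset.sum_le_sum fun m _ => ?_
            have hdnn : 0 ≤ ind m (u (i + 1)) - ind m (u i) :=
              sub_nonneg.mpr (hindmono m (hu (Nat.le_succ i)))
            rw [abs_mul, abs_mul, abs_of_nonneg hdnn, abs_of_nonneg hfactnn]
        _ = ENNReal.ofReal (∑ i ∈ Finset.range N', ∑ m ∈ Finset.Ico (k + 1) n,
              (k.factorial : ℝ) * |α m| * (ind m (u (i + 1)) - ind m (u i))) := by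
            rw [ENNReal.ofReal_sum_of_nonneg]
            intro i _
            refine Finset.sum_nonneg fun m _ => ?_
            have hdnn : 0 ≤ ind m (u (i + 1)) - ind m (u i) :=
              sub_nonneg.mpr (hindmono m (hu (Nat.le_succ i)))
            positivity
        _ ≤ ENNReal.ofReal ((k.factorial : ℝ) * ∑ m ∈ Finset.Ico (k + 1) n, |α m|) := by
            refine ENNReal.ofReal_le_ofReal ?_
            rw [Finset.sum_comm, Finset.mul_sum]
            refine Finset.sum_le_sum fun m _ => ?_
            rw [← Finset.mul_sum, Finset.sum_range_sub (fun i => ind m (u i))]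
            have h1 : ind m (u N') - ind m (u 0) ≤ 1 := by
              have ha := (hind01 m (u N')).2; have hb := (hind01 m (u 0)).1; linarith
            have hnn : (0:ℝ) ≤ (k.factorial : ℝ) * |α m| := by positivity
            calc (k.factorial : ℝ) * |α m| * (ind m (u N') - ind m (u 0))
                ≤ (k.factorial : ℝ) * |α m| * 1 := mul_le_mul_of_nonneg_left h1 hnn
              _ = (k.factorial : ℝ) * |α m| := mul_one _
    · set u : ℕ → ℝ := fun j => if j = 0 then t k - 1 else (t (k + j - 1) + t (k + j)) / 2
        with hudef
      have htle : ∀ i j, i ≤ j → j < n → t i ≤ t j := by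
        intro i j hij hj
        rcases eq_or_lt_of_le hij with rfl | hlt
        · exact le_rfl
        · exact (ht i j hlt hj).le
      have hub : ∀ j, 1 ≤ j → j ≤ N → t (k + j - 1) < u j ∧ u j < t (k + j) := by
        intro j h1 h2
        have hlt : t (k + j - 1) < t (k + j) := ht _ _ (by omega) (by omega)
        constructor <;> simp only [hudef, if_neg (by omega : ¬ j = 0)] <;> linarith
      have hu0 : ∀ m, k + 1 ≤ m → m < n → ¬ t (m - 1) < u 0 := by
        intro m hm1 hm2
        simp only [hudef, if_pos rfl]
        have : t k ≤ t (m - 1) := htle _ _ (by omega) (by omega)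
        linarith
      have hindu : ∀ j, j ≤ N → ∀ m ∈ Finset.Ico (k + 1) n,
          ind m (u j) = if m ≤ k + j then 1 else 0 := by
        intro j hj m hm
        obtain ⟨hm1, hm2⟩ := Finset.mem_Ico.mp hm
        rcases Nat.eq_zero_or_pos j with rfl | hjpos
        · rw [if_neg (by omega : ¬ m ≤ k + 0)]
          simp only [hind]
          rw [if_neg (hu0 m hm1 hm2)]
        · obtain ⟨hl, hr⟩ := hub j hjpos hj
          by_cases hc2 : m ≤ k + j
          · rw [if_pos hc2]
            simp only [hind]
            rw [if_pos (lt_of_le_of_lt (htle (m - 1) (k + j - 1) (by omega) (by omega)) hl)]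
          · rw [if_neg hc2]
            simp only [hind]
            rw [if_neg (not_lt.mpr ((le_of_lt hr).trans
              (htle (k + j) (m - 1) (by omega) (by omega))))]
      have humono : MonotoneOn u (Set.Icc 0 N) := by
        intro a ha b hb hab
        rcases eq_or_lt_of_le hab with rfl | hlt
        · exact le_rfl
        rcases Nat.eq_zero_or_pos a with rfl | hapos
        · have hb1 : 1 ≤ b := hlt
          have hb2 : b ≤ N := hb.2
          have hB := hub b hb1 hb2
          have htk : t k ≤ t (k + b - 1) := htle _ _ (by omega) (by omega)
          have h0 : u 0 = t k - 1 := by simp [hudef]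
          linarith [hB.1]
        · have ha2 : a ≤ N := ha.2
          have hb2 : b ≤ N := hb.2
          have hA := hub a hapos ha2
          have hB := hub b (by omega) hb2
          have hmid : t (k + a) ≤ t (k + b - 1) := htle _ _ (by omega) (by omega)
          linarith [hA.2, hB.1]
      have hsum := eVariationOn.sum_le_of_monotoneOn_Icc (f := D) (m := 0) (n := N) (u := u)
        humono (fun i _ => Set.mem_univ _)
      have hterm : ∀ i ∈ Finset.Ico 0 N, edist (D (u (i + 1))) (D (u i))
          = ENNReal.ofReal ((k.factorial : ℝ) * |α (k + 1 + i)|) := by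
        intro i hi
        have hiN : i < N := (Finset.mem_Ico.mp hi).2
        rw [hedist, hD]
        have hcongr : ∑ m ∈ Finset.Ico (k + 1) n,
              (k.factorial : ℝ) * α m * (ind m (u (i + 1)) - ind m (u i))
            = ∑ m ∈ Finset.Ico (k + 1) n,
              (if m = k + 1 + i then (k.factorial : ℝ) * α m else 0) := by
          refine Finset.sum_congr rfl fun m hm => ?_
          rw [hindu (i + 1) (by omega) m hm, hindu i (by omega) m hm]
          obtain ⟨hm1, hm2⟩ := Finset.mem_Ico.mp hm
          by_cases hme : m = k + 1 + i
          · rw [if_pos hme, if_pos (by omega : m ≤ k + (i + 1)), if_neg (by omega : ¬ m ≤ k + i)]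
            ring
          · rw [if_neg hme]
            by_cases hle1 : m ≤ k + i
            · rw [if_pos (by omega : m ≤ k + (i + 1)), if_pos hle1]; ring
            · rw [if_neg (by omega : ¬ m ≤ k + (i + 1)), if_neg hle1]; ring
        rw [hcongr, Finset.sum_ite_eq' (Finset.Ico (k + 1) n) (k + 1 + i)
          (fun m => (k.factorial : ℝ) * α m)]
        rw [if_pos (Finset.mem_Ico.mpr ⟨by omega, by omega⟩)]
        rw [abs_mul, abs_of_nonneg hfactnn]
      calc ENNReal.ofReal ((k.factorial : ℝ) * ∑ m ∈ Finset.Ico (k + 1) n, |α m|)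
          = ∑ i ∈ Finset.Ico 0 N, edist (D (u (i + 1))) (D (u i)) := by
            rw [Finset.sum_congr rfl hterm,
              ← ENNReal.ofReal_sum_of_nonneg (fun i _ => by positivity)]
            congr 1
            rw [Finset.sum_Ico_eq_sum_range (f := fun m => |α m|), Finset.mul_sum,
              ← Finset.range_eq_Ico, hN]
        _ ≤ eVariationOn D Set.univ := hsum
end
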